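/- The function G(p,α) = 4·((p·(1/2) + (1−p)·(5/2))² − 2·cos²(α)·p·(1−p)) (the risk-normalized Fisher information of the superposition √p·ψ_0 + e^{iα}√(1−p)·ψ_2 at fixed risk) attains its minimum over p ∈ [0,1] and α ∈ ℝ at p = 1, where G(1,α) = 1 for every α; hence in the transactional (fixed-risk) picture the ground state minimizes Fisher information, with I_F = 1/r. -/
import Mathlib

open Real

theorem stmt_19 :
    (∀ α : ℝ,
        4 * (((1 : ℝ) * (1 / 2) + (1 - 1) * (5 / 2)) ^ 2
            - 2 * Real.cos α ^ 2 * 1 * (1 - 1)) = 1)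
    ∧ ∀ p ∈ Set.Icc (0 : ℝ) 1, ∀ α : ℝ,
        (1 : ℝ) ≤ 4 * ((p * (1 / 2) + (1 - p) * (5 / 2)) ^ 2
            - 2 * Real.cos α ^ 2 * p * (1 - p)) := by
  constructor
  · intro α; ring
  · rintro p ⟨hp0, hp1⟩ α
    have hc := Real.cos_sq_le_one α
    nlinarith [sq_nonneg (p - 1), sq_nonneg (Real.cos α), mul_nonneg hp0 (sub_nonneg.2 hp1)]
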